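/- Let f : ℝ → ℂ be a continuous function and let C ≥ 0 be such that for every complex Hilbert space H, every bounded self-adjoint operator A on H and every bounded operator R on H one has the commutator estimate ‖f(A) R − R f(A)‖ ≤ C·‖(A R − R A)(A + iI)⁻¹‖. Then for every complex Hilbert space H, all bounded self-adjoint operators A, B on H and every bounded operator R on H one has the quasi-commutator estimate ‖f(B) R − R f(A)‖ ≤ C·‖(B R − R A)(A + iI)⁻¹‖. -/

import Mathlib

open Complex

universe u

/-- Functional calculus `f(A)` for a continuous `f : ℝ → ℂ` and a (self-adjoint, hence
normal) bounded operator `A`, obtained by applying `z ↦ f (Re z)` to `A` via the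
continuous functional calculus. -/
noncomputable def opFC {H : Type u} [NormedAddCommGroup H] [InnerProductSpace ℂ H]
    [CompleteSpace H] (f : ℝ → ℂ) (A : H →L[ℂ] H) : H →L[ℂ] H :=
  cfc (fun z : ℂ => f z.re) A

noncomputable section QcAux

open ContinuousLinearMap

set_option linter.unnecessarySeqFocus false
set_option linter.unusedSectionVars false

lemma QcAux.ringInverse_eq_of_mul {M : Type*} [MonoidWithZero M] {a b : M}
    (h1 : a * b = 1) (h2 : b * a = 1) : Ring.inverse a = b :=
  Ring.inverse_unit ⟨a, b, h1, h2⟩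

lemma QcAux.ringInverse_prod {M N : Type*} [MonoidWithZero M] [MonoidWithZero N]
    {x : M} {y : N} (hx : IsUnit x) (hy : IsUnit y) :
    Ring.inverse (x, y) = (Ring.inverse x, Ring.inverse y) := by
  obtain ⟨u, rfl⟩ := hx
  obtain ⟨v, rfl⟩ := hy
  rw [Ring.inverse_unit, Ring.inverse_unit]
  exact QcAux.ringInverse_eq_of_mul (by simp [Prod.mk_mul_mk, Prod.ext_iff])
    (by simp [Prod.mk_mul_mk, Prod.ext_iff])

lemma QcAux.isUnit_pair {M N : Type*} [Monoid M] [Monoid N] {x : M} {y : N}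
    (hx : IsUnit x) (hy : IsUnit y) : IsUnit (x, y) := by
  obtain ⟨u, rfl⟩ := hx; obtain ⟨v, rfl⟩ := hy
  exact ⟨⟨(↑u, ↑v), (↑u⁻¹, ↑v⁻¹), by simp [Prod.mk_mul_mk, Prod.ext_iff],
    by simp [Prod.mk_mul_mk, Prod.ext_iff]⟩, rfl⟩

variable {H : Type u} [NormedAddCommGroup H] [InnerProductSpace ℂ H] [CompleteSpace H]

/-- The block-diagonal star algebra homomorphism into operators on `H ⊕₂ H`. -/
def QcAux.iotaSA : ((H →L[ℂ] H) × (H →L[ℂ] H)) →⋆ₐ[ℂ]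
    (WithLp 2 (H × H) →L[ℂ] WithLp 2 (H × H)) where
  toFun p :=
    (WithLp.prodContinuousLinearEquiv 2 ℂ H H).symm.toContinuousLinearMap ∘L
      (p.1.prodMap p.2) ∘L (WithLp.prodContinuousLinearEquiv 2 ℂ H H).toContinuousLinearMap
  map_one' := by ext w <;> rfl
  map_mul' p q := by ext w <;> rfl
  map_zero' := by ext w <;> rfl
  map_add' p q := by ext w <;> rfl
  commutes' c := by ext w <;> rfl
  map_star' p := by
    have := (ContinuousLinearMap.eq_adjoint_iff
      ((WithLp.prodContinuousLinearEquiv 2 ℂ H H).symm.toContinuousLinearMap ∘L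
        ((star p.1).prodMap (star p.2)) ∘L
          (WithLp.prodContinuousLinearEquiv 2 ℂ H H).toContinuousLinearMap)
      ((WithLp.prodContinuousLinearEquiv 2 ℂ H H).symm.toContinuousLinearMap ∘L
        (p.1.prodMap p.2) ∘L
          (WithLp.prodContinuousLinearEquiv 2 ℂ H H).toContinuousLinearMap)).mpr
    rw [ContinuousLinearMap.star_eq_adjoint]
    apply this
    intro x y
    simp [WithLp.prod_inner_apply, ContinuousLinearMap.star_eq_adjoint,
      ContinuousLinearMap.adjoint_inner_left]

namespace QcAux

lemma iotaSA_continuous : Continuous (iotaSA (H := H)) := by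
  have : ⇑(iotaSA (H := H)) = fun p =>
      (WithLp.prodContinuousLinearEquiv 2 ℂ H H).symm.toContinuousLinearMap ∘L
        ((ContinuousLinearMap.prodMapL ℂ H H H H) p) ∘L
          (WithLp.prodContinuousLinearEquiv 2 ℂ H H).toContinuousLinearMap := by
    funext p
    simp [iotaSA, ContinuousLinearMap.prodMapL_apply]
  rw [this]
  exact continuous_const.clm_comp
    (((ContinuousLinearMap.prodMapL ℂ H H H H).continuous).clm_comp continuous_const)

/-- The lower-left corner embedding. -/
def cornerOp (S : H →L[ℂ] H) : WithLp 2 (H × H) →L[ℂ] WithLp 2 (H × H) :=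
  ((WithLp.prodContinuousLinearEquiv 2 ℂ H H).symm.toContinuousLinearMap ∘L inr ℂ H H) ∘L
    S ∘L ((fst ℂ H H) ∘L (WithLp.prodContinuousLinearEquiv 2 ℂ H H).toContinuousLinearMap)

lemma iotaSA_mul_corner (p : (H →L[ℂ] H) × (H →L[ℂ] H)) (S : H →L[ℂ] H) :
    iotaSA p * cornerOp S = cornerOp (p.2 * S) := by
  refine ContinuousLinearMap.ext fun w => ?_
  show (WithLp.equiv 2 (H × H)).symm (p.1 0, p.2 (S w.fst))
      = (WithLp.equiv 2 (H × H)).symm (0, p.2 (S w.fst))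
  rw [map_zero]

lemma corner_mul_iotaSA (p : (H →L[ℂ] H) × (H →L[ℂ] H)) (S : H →L[ℂ] H) :
    cornerOp S * iotaSA p = cornerOp (S * p.1) := by ext w <;> rfl

lemma corner_sub (S T : H →L[ℂ] H) :
    cornerOp S - cornerOp T = cornerOp (S - T) := by
  refine ContinuousLinearMap.ext fun w => ?_
  show ((WithLp.equiv 2 (H × H)).symm (0, S w.fst)) - ((WithLp.equiv 2 (H × H)).symm (0, T w.fst))
      = (WithLp.equiv 2 (H × H)).symm (0, S w.fst - T w.fst)
  rw [WithLp.ext_iff]; apply Prod.ext <;> simp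

lemma norm_fst_le_withLp (w : WithLp 2 (H × H)) : ‖w.fst‖ ≤ ‖w‖ := by
  have h := WithLp.prod_norm_sq_eq_of_L2 w
  nlinarith [norm_nonneg w, norm_nonneg w.fst, norm_nonneg w.snd, sq_nonneg ‖w.snd‖]

lemma norm_corner (S : H →L[ℂ] H) : ‖cornerOp S‖ = ‖S‖ := by
  apply le_antisymm
  · refine ContinuousLinearMap.opNorm_le_bound _ (norm_nonneg S) fun w => ?_
    have h1 : cornerOp S w = (WithLp.equiv 2 (H × H)).symm (0, S w.fst) := rfl
    rw [h1, WithLp.equiv_symm_apply, WithLp.norm_toLp_snd]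
    calc ‖S w.fst‖ ≤ ‖S‖ * ‖w.fst‖ := S.le_opNorm _
    _ ≤ ‖S‖ * ‖w‖ := mul_le_mul_of_nonneg_left (norm_fst_le_withLp w) (norm_nonneg S)
  · refine ContinuousLinearMap.opNorm_le_bound _ (norm_nonneg _) fun u => ?_
    have h1 : S u = (cornerOp S ((WithLp.equiv 2 (H × H)).symm (u, 0))).snd := rfl
    have h2 : ‖(cornerOp S ((WithLp.equiv 2 (H × H)).symm (u, 0)))‖
        = ‖(cornerOp S ((WithLp.equiv 2 (H × H)).symm (u, 0))).snd‖ := by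
      have : cornerOp S ((WithLp.equiv 2 (H × H)).symm (u, 0))
          = (WithLp.equiv 2 (H × H)).symm (0, S u) := rfl
      rw [this, WithLp.equiv_symm_apply, WithLp.norm_toLp_snd]; rfl
    rw [h1, ← h2]
    calc ‖cornerOp S ((WithLp.equiv 2 (H × H)).symm (u, 0))‖
        ≤ ‖cornerOp S‖ * ‖(WithLp.equiv 2 (H × H)).symm (u, 0)‖ := (cornerOp S).le_opNorm _
    _ = ‖cornerOp S‖ * ‖u‖ := by rw [WithLp.equiv_symm_apply, WithLp.norm_toLp_fst]

lemma isUnit_add_I {A : H →L[ℂ] H} (hA : IsSelfAdjoint A) :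
    IsUnit (A + Complex.I • (1 : H →L[ℂ] H)) := by
  have h1 : (-Complex.I) ∉ spectrum ℂ A := by
    intro hm
    have := hA.mem_spectrum_eq_re hm
    simp at this
  rw [spectrum.notMem_iff] at h1
  have heq : algebraMap ℂ (H →L[ℂ] H) (-Complex.I) - A = -(A + Complex.I • 1) := by
    rw [Algebra.algebraMap_eq_smul_one, neg_smul]
    abel
  rw [heq] at h1
  simpa using h1.neg

lemma ringInverse_iota {p : (H →L[ℂ] H) × (H →L[ℂ] H)} (hp : IsUnit p) :
    Ring.inverse (iotaSA p) = iotaSA (Ring.inverse p) := by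
  obtain ⟨u, rfl⟩ := hp
  rw [Ring.inverse_unit]
  exact ringInverse_eq_of_mul (by rw [← map_mul, u.mul_inv, map_one])
    (by rw [← map_mul, u.inv_mul, map_one])

lemma isSelfAdjoint_pair {A B : H →L[ℂ] H} (hA : IsSelfAdjoint A) (hB : IsSelfAdjoint B) :
    IsSelfAdjoint ((A, B) : (H →L[ℂ] H) × (H →L[ℂ] H)) :=
  Prod.ext hA.star_eq hB.star_eq

lemma opFC_iota (f : ℝ → ℂ) (hf : Continuous f) {A B : H →L[ℂ] H}
    (hA : IsSelfAdjoint A) (hB : IsSelfAdjoint B) :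
    opFC f (iotaSA (A, B)) = iotaSA (opFC f A, opFC f B) := by
  have hAB : IsSelfAdjoint ((A, B) : (H →L[ℂ] H) × (H →L[ℂ] H)) := isSelfAdjoint_pair hA hB
  have hN : IsStarNormal ((A, B) : (H →L[ℂ] H) × (H →L[ℂ] H)) := hAB.isStarNormal
  have hSA : IsSelfAdjoint (iotaSA (A, B)) := by
    rw [isSelfAdjoint_iff, ← map_star, hAB.star_eq]
  have hNι : IsStarNormal (iotaSA (A, B)) := hSA.isStarNormal
  have hg : ContinuousOn (fun z : ℂ => f z.re) (spectrum ℂ ((A, B) : (H →L[ℂ] H) × (H →L[ℂ] H))) :=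
    (hf.comp Complex.continuous_re).continuousOn
  unfold opFC
  rw [← StarAlgHom.map_cfc iotaSA (fun z : ℂ => f z.re) ((A, B)) hg iotaSA_continuous hN hNι]
  congr 1
  have h1 := StarAlgHom.map_cfc (StarAlgHom.fst ℂ (H →L[ℂ] H) (H →L[ℂ] H))
    (fun z : ℂ => f z.re) ((A, B)) hg continuous_fst hN hA.isStarNormal
  have h2 := StarAlgHom.map_cfc (StarAlgHom.snd ℂ (H →L[ℂ] H) (H →L[ℂ] H))
    (fun z : ℂ => f z.re) ((A, B)) hg continuous_snd hN hB.isStarNormal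
  exact Prod.ext (by simpa using h1) (by simpa using h2)

end QcAux

end QcAux

/-- Implication (b) ⇒ (c) of Theorem 7.1 (bounded case): if a continuous `f : ℝ → ℂ`
satisfies the commutator estimate
`‖f(A) R − R f(A)‖ ≤ C ‖(A R − R A)(A + iI)⁻¹‖` for every bounded self-adjoint `A` and
every bounded `R` on every complex Hilbert space, then one has the quasi-commutator
estimate `‖f(B) R − R f(A)‖ ≤ C ‖(B R − R A)(A + iI)⁻¹‖` for all bounded self-adjoint
`A, B` and bounded `R`. -/
theorem stmt11 (f : ℝ → ℂ) (hf : Continuous f) (C : ℝ) (hC : 0 ≤ C)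
    (h : ∀ (H : Type u) (_ : NormedAddCommGroup H) (_ : InnerProductSpace ℂ H)
      (_ : CompleteSpace H) (A R : H →L[ℂ] H), IsSelfAdjoint A →
      ‖opFC f A * R - R * opFC f A‖ ≤
        C * ‖(A * R - R * A) * Ring.inverse (A + Complex.I • 1)‖) :
    ∀ (H : Type u) (_ : NormedAddCommGroup H) (_ : InnerProductSpace ℂ H)
      (_ : CompleteSpace H) (A B R : H →L[ℂ] H),
      IsSelfAdjoint A → IsSelfAdjoint B →
      ‖opFC f B * R - R * opFC f A‖ ≤
        C * ‖(B * R - R * A) * Ring.inverse (A + Complex.I • 1)‖ := by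
  intro H _ _ _ A B R hA hB
  classical
  set D : WithLp 2 (H × H) →L[ℂ] WithLp 2 (H × H) := QcAux.iotaSA (A, B) with hD
  set R' : WithLp 2 (H × H) →L[ℂ] WithLp 2 (H × H) := QcAux.cornerOp R with hR'
  have hDsa : IsSelfAdjoint D := by
    rw [hD, isSelfAdjoint_iff, ← map_star, (QcAux.isSelfAdjoint_pair hA hB).star_eq]
  have key := h (WithLp 2 (H × H)) _ _ _ D R' hDsa
  -- rewrite the left-hand side
  have hL : opFC f D * R' - R' * opFC f D = QcAux.cornerOp (opFC f B * R - R * opFC f A) := by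
    rw [hD, QcAux.opFC_iota f hf hA hB, hR', QcAux.iotaSA_mul_corner,
      QcAux.corner_mul_iotaSA, QcAux.corner_sub]
  -- rewrite the right-hand side
  have hUA : IsUnit (A + Complex.I • (1 : H →L[ℂ] H)) := QcAux.isUnit_add_I hA
  have hUB : IsUnit (B + Complex.I • (1 : H →L[ℂ] H)) := QcAux.isUnit_add_I hB
  have hDadd : D + Complex.I • 1
      = QcAux.iotaSA (A + Complex.I • 1, B + Complex.I • 1) := by
    have hp : ((A + Complex.I • 1, B + Complex.I • 1) : (H →L[ℂ] H) × (H →L[ℂ] H))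
        = (A, B) + Complex.I • (1 : (H →L[ℂ] H) × (H →L[ℂ] H)) := by
      apply Prod.ext <;> rfl
    rw [hD, hp, map_add, map_smul, map_one]
  have hR : (D * R' - R' * D) * Ring.inverse (D + Complex.I • 1)
      = QcAux.cornerOp ((B * R - R * A) * Ring.inverse (A + Complex.I • 1)) := by
    rw [hDadd, QcAux.ringInverse_iota (QcAux.isUnit_pair hUA hUB),
      QcAux.ringInverse_prod hUA hUB]
    rw [hD, hR', QcAux.iotaSA_mul_corner, QcAux.corner_mul_iotaSA, QcAux.corner_sub,
      QcAux.corner_mul_iotaSA]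
  rw [hL, hR, QcAux.norm_corner, QcAux.norm_corner] at key
  exact key
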